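/- Assume k and p are symmetric dispersal kernels, m, M ∈ C(Ω̄) are nonconstant, and d, D, b, c > 0 with 0 < bc ≤ 1. If (u,v) and (u*,v*) are two positive steady states of the competition system with u(x) > u*(x) and v(x) < v*(x) for all x ∈ Ω̄, then bc = 1 and u(x) + c·v(x) = u*(x) + c·v*(x) for every x ∈ Ω̄. -/

import Mathlib

open MeasureTheory Topology Filter

noncomputable section

abbrev Pt (n : ℕ) := EuclideanSpace ℝ (Fin n)

def IsBoundedDomain {n : ℕ} (Ω : Set (Pt n)) : Prop :=
  IsOpen Ω ∧ IsConnected Ω ∧ Bornology.IsBounded Ω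

def IsDispersalKernel {n : ℕ} (k : Pt n → Pt n → ℝ) : Prop :=
  Continuous (Function.uncurry k) ∧ (∀ x y, 0 ≤ k x y) ∧ (∀ x, 0 < k x x) ∧
  (∀ x, (∫ y, k x y) = 1) ∧ (∀ x, (∫ y, k y x) = 1)

def SymmKernel {n : ℕ} (k : Pt n → Pt n → ℝ) : Prop := ∀ x y, k x y = k y x

def nlOp {n : ℕ} (Ω : Set (Pt n)) (k : Pt n → Pt n → ℝ) (φ : Pt n → ℝ) (x : Pt n) : ℝ :=
  (∫ y in Ω, k x y * φ y) - (∫ y in Ω, k y x) * φ x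

def Nonconstant {n : ℕ} (Ω : Set (Pt n)) (m : Pt n → ℝ) : Prop :=
  ¬ ∃ a : ℝ, ∀ x ∈ closure Ω, m x = a

def SemiTrivialProfile {n : ℕ} (Ω : Set (Pt n)) (k : Pt n → Pt n → ℝ) (d : ℝ)
    (m u : Pt n → ℝ) : Prop :=
  ContinuousOn u (closure Ω) ∧ (∀ x ∈ closure Ω, 0 < u x) ∧
  ∀ x ∈ closure Ω, d * nlOp Ω k u x + u x * (m x - u x) = 0

def stabIdx {n : ℕ} (Ω : Set (Pt n)) (p : Pt n → Pt n → ℝ) (D : ℝ) (q : Pt n → ℝ) : ℝ :=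
  sSup {r : ℝ | ∃ ψ : Pt n → ℝ, MemLp ψ 2 (volume.restrict Ω) ∧
    ¬ ψ =ᵐ[volume.restrict Ω] (fun _ => (0:ℝ)) ∧
    r = (∫ x in Ω, (D * ψ x * nlOp Ω p ψ x + q x * ψ x ^ 2)) / (∫ x in Ω, ψ x ^ 2)}

def IsSteadyState {n : ℕ} (Ω : Set (Pt n)) (k p : Pt n → Pt n → ℝ)
    (d D b c : ℝ) (m M u v : Pt n → ℝ) : Prop :=
  ContinuousOn u (closure Ω) ∧ ContinuousOn v (closure Ω) ∧
  (∀ x ∈ closure Ω, d * nlOp Ω k u x + u x * (m x - u x - c * v x) = 0) ∧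
  (∀ x ∈ closure Ω, D * nlOp Ω p v x + v x * (M x - b * u x - v x) = 0)

def IsPositiveSteadyState {n : ℕ} (Ω : Set (Pt n)) (k p : Pt n → Pt n → ℝ)
    (d D b c : ℝ) (m M u v : Pt n → ℝ) : Prop :=
  IsSteadyState Ω k p d D b c m M u v ∧
  (∀ x ∈ closure Ω, 0 < u x) ∧ (∀ x ∈ closure Ω, 0 < v x)

def IsBoundedClassicalSolution {n : ℕ} (Ω : Set (Pt n)) (k p : Pt n → Pt n → ℝ)
    (d D b c : ℝ) (m M : Pt n → ℝ) (u v : Pt n → ℝ → ℝ) : Prop :=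
  ContinuousOn (fun q : Pt n × ℝ => u q.1 q.2) (closure Ω ×ˢ Set.Ici 0) ∧
  ContinuousOn (fun q : Pt n × ℝ => v q.1 q.2) (closure Ω ×ˢ Set.Ici 0) ∧
  (∃ C : ℝ, ∀ x ∈ closure Ω, ∀ t ≥ (0:ℝ), |u x t| ≤ C ∧ |v x t| ≤ C) ∧
  (∀ x ∈ closure Ω, ∀ t ≥ (0:ℝ), DifferentiableWithinAt ℝ (u x) (Set.Ici 0) t ∧
      DifferentiableWithinAt ℝ (v x) (Set.Ici 0) t) ∧
  (∀ x ∈ closure Ω, ∀ t > (0:ℝ),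
      HasDerivAt (u x)
        (d * nlOp Ω k (fun y => u y t) x + u x t * (m x - u x t - c * v x t)) t ∧
      HasDerivAt (v x)
        (D * nlOp Ω p (fun y => v y t) x + v x t * (M x - b * u x t - v x t)) t)

lemma core_ineq {A P B Q : ℝ} (h1 : 0 < P) (h2 : P < A) (h3 : 0 < Q) (h4 : Q < B) :
    ((A - P)^2/(A*P) - (B - Q)^2/(B*Q)) * (P*B - A*Q) ≤ 0 := by
  have hA : 0 < A := h1.trans h2
  have hBpos : 0 < B := h3.trans h4
  have key : ((A - P)^2/(A*P) - (B - Q)^2/(B*Q)) * (P*B - A*Q)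
      = -((A*Q - B*P)^2 * (A*B - P*Q)) / (A*P*(B*Q)) := by
    field_simp
    ring
  rw [key]
  apply div_nonpos_of_nonpos_of_nonneg
  · have h5 : 0 ≤ A*B - P*Q := by nlinarith
    exact neg_nonpos.mpr (mul_nonneg (sq_nonneg _) h5)
  · positivity

lemma isCompact_closure_of_bounded {n : ℕ} {Ω : Set (Pt n)} (hb : Bornology.IsBounded Ω) :
    IsCompact (closure Ω) :=
  Metric.isCompact_of_isClosed_isBounded isClosed_closure hb.closure

lemma integrableOn_of_contOn {n : ℕ} {Ω : Set (Pt n)} (hb : Bornology.IsBounded Ω)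
    {f : Pt n → ℝ} (hf : ContinuousOn f (closure Ω)) : IntegrableOn f Ω volume :=
  ((hf.integrableOn_compact (isCompact_closure_of_bounded hb))).mono_set subset_closure

lemma integrable_prod_of_contOn {n : ℕ} {Ω : Set (Pt n)} (hmeas : MeasurableSet Ω)
    (hb : Bornology.IsBounded Ω) {F : Pt n × Pt n → ℝ}
    (hF : ContinuousOn F (closure Ω ×ˢ closure Ω)) :
    Integrable F ((volume.restrict Ω).prod (volume.restrict Ω)) := by
  rw [Measure.prod_restrict]
  have hK : IsCompact (closure Ω ×ˢ closure Ω) :=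
    (isCompact_closure_of_bounded hb).prod (isCompact_closure_of_bounded hb)
  obtain ⟨C, hC⟩ := hK.exists_bound_of_continuousOn hF
  have hsub : Ω ×ˢ Ω ⊆ closure Ω ×ˢ closure Ω :=
    Set.prod_mono subset_closure subset_closure
  have hAESM : AEStronglyMeasurable F ((volume.prod volume).restrict (Ω ×ˢ Ω)) :=
    (hF.mono hsub).aestronglyMeasurable (hmeas.prod hmeas)
  have hfin : ((volume.prod volume).restrict (Ω ×ˢ Ω)) Set.univ < ⊤ := by
    rw [Measure.restrict_apply_univ, Measure.prod_prod]
    exact ENNReal.mul_lt_top hb.measure_lt_top hb.measure_lt_top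
  refine Integrable.mono' (g := fun _ => C) (integrable_const_iff.2 (Or.inr ⟨hfin⟩)) hAESM ?_
  refine (ae_restrict_iff' (hmeas.prod hmeas)).2 (ae_of_all _ fun q hq => ?_)
  exact hC q (hsub hq)

lemma sym_nonpos {n : ℕ} {Ω : Set (Pt n)} (hmeas : MeasurableSet Ω)
    (hb : Bornology.IsBounded Ω)
    (k : Pt n → Pt n → ℝ) (hkc : Continuous (Function.uncurry k))
    (hknn : ∀ x y, 0 ≤ k x y) (hksym : ∀ x y, k x y = k y x)
    (f g h : Pt n → ℝ) (hf : ContinuousOn f (closure Ω)) (hg : ContinuousOn g (closure Ω))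
    (hh : ContinuousOn h (closure Ω))
    (hpt : ∀ x ∈ Ω, ∀ y ∈ Ω, (h x - h y) * (f x * g y - g x * f y) ≤ 0) :
    (∫ x in Ω, h x * ∫ y in Ω, k x y * (f x * g y - g x * f y)) ≤ 0 := by
  set μ := volume.restrict Ω with hμ
  set F : Pt n → Pt n → ℝ := fun x y => h x * (k x y * (f x * g y - g x * f y)) with hF
  set K := closure Ω ×ˢ closure Ω with hK
  have hcF : ContinuousOn (Function.uncurry F) K := by
    have h1 : ContinuousOn (fun q : Pt n × Pt n => h q.1) K :=
      hh.comp continuous_fst.continuousOn (fun q hq => hq.1)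
    have h2 : ContinuousOn (fun q : Pt n × Pt n => f q.1) K :=
      hf.comp continuous_fst.continuousOn (fun q hq => hq.1)
    have h3 : ContinuousOn (fun q : Pt n × Pt n => g q.1) K :=
      hg.comp continuous_fst.continuousOn (fun q hq => hq.1)
    have h4 : ContinuousOn (fun q : Pt n × Pt n => f q.2) K :=
      hf.comp continuous_snd.continuousOn (fun q hq => hq.2)
    have h5 : ContinuousOn (fun q : Pt n × Pt n => g q.2) K :=
      hg.comp continuous_snd.continuousOn (fun q hq => hq.2)
    exact h1.mul ((hkc.continuousOn).mul ((h2.mul h5).sub (h3.mul h4)))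
  have hcG : ContinuousOn (fun q : Pt n × Pt n => Function.uncurry F (q.2, q.1)) K := by
    apply hcF.comp (continuous_swap.continuousOn)
    exact fun q hq => ⟨hq.2, hq.1⟩
  have hFi : Integrable (Function.uncurry F) (μ.prod μ) :=
    integrable_prod_of_contOn hmeas hb hcF
  have hGi : Integrable (fun q : Pt n × Pt n => Function.uncurry F (q.2, q.1)) (μ.prod μ) :=
    integrable_prod_of_contOn hmeas hb hcG
  -- swap identity
  have hswap : ∫ q : Pt n × Pt n, Function.uncurry F (q.2, q.1) ∂(μ.prod μ)
      = ∫ q : Pt n × Pt n, Function.uncurry F q ∂(μ.prod μ) := by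
    conv_rhs => rw [← Measure.prod_swap (μ := μ) (ν := μ)]
    rw [show (Prod.swap : Pt n × Pt n → Pt n × Pt n) = ⇑(MeasurableEquiv.prodComm (α := Pt n) (β := Pt n)) from rfl,
      integral_map_equiv]
    rfl
  have hsum : ∫ q : Pt n × Pt n, (Function.uncurry F q + Function.uncurry F (q.2, q.1)) ∂(μ.prod μ) ≤ 0 := by
    apply integral_nonpos_of_ae
    rw [hμ, Measure.prod_restrict]
    refine (ae_restrict_iff' (hmeas.prod hmeas)).2 (ae_of_all _ ?_)
    rintro ⟨x, y⟩ ⟨hx, hy⟩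
    have : Function.uncurry F (x, y) + Function.uncurry F (y, x)
        = k x y * ((h x - h y) * (f x * g y - g x * f y)) := by
      simp only [Function.uncurry, hF]
      rw [hksym y x]; ring
    simp only [Pi.zero_apply]
    calc Function.uncurry F (x, y) + Function.uncurry F ((x, y).2, (x, y).1)
        = k x y * ((h x - h y) * (f x * g y - g x * f y)) := this
      _ ≤ 0 := mul_nonpos_of_nonneg_of_nonpos (hknn x y) (hpt x hx y hy)
  have hT : ∫ q : Pt n × Pt n, Function.uncurry F q ∂(μ.prod μ) ≤ 0 := by
    have := integral_add hFi hGi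
    rw [this, hswap] at hsum
    linarith
  calc (∫ x in Ω, h x * ∫ y in Ω, k x y * (f x * g y - g x * f y))
      = ∫ x, (∫ y, F x y ∂μ) ∂μ := by
        refine integral_congr_ae (ae_of_all _ fun x => ?_)
        simp only [hF]
        rw [integral_const_mul]
    _ = ∫ q : Pt n × Pt n, Function.uncurry F q ∂(μ.prod μ) := by
        rw [integral_integral hFi]; rfl
    _ ≤ 0 := hT

lemma kmul_integrable {n : ℕ} {Ω : Set (Pt n)} (hb : Bornology.IsBounded Ω)
    {k : Pt n → Pt n → ℝ} (hkc : Continuous (Function.uncurry k))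
    {f : Pt n → ℝ} (hf : ContinuousOn f (closure Ω)) (x : Pt n) :
    IntegrableOn (fun y => k x y * f y) Ω volume := by
  apply integrableOn_of_contOn hb
  exact ((hkc.comp (Continuous.prodMk_right x)).continuousOn).mul hf

lemma nlOp_cross {n : ℕ} {Ω : Set (Pt n)} (hb : Bornology.IsBounded Ω)
    {k : Pt n → Pt n → ℝ} (hkc : Continuous (Function.uncurry k))
    {f g : Pt n → ℝ} (hf : ContinuousOn f (closure Ω)) (hg : ContinuousOn g (closure Ω))
    (x : Pt n) :
    f x * nlOp Ω k g x - g x * nlOp Ω k f x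
      = ∫ y in Ω, k x y * (f x * g y - g x * f y) := by
  have hif : IntegrableOn (fun y => k x y * f y) Ω volume := kmul_integrable hb hkc hf x
  have hig : IntegrableOn (fun y => k x y * g y) Ω volume := kmul_integrable hb hkc hg x
  have step1 : f x * nlOp Ω k g x - g x * nlOp Ω k f x
      = f x * (∫ y in Ω, k x y * g y) - g x * (∫ y in Ω, k x y * f y) := by
    unfold nlOp; ring
  rw [step1, ← integral_const_mul, ← integral_const_mul,
    ← integral_sub (hig.const_mul _) (hif.const_mul _)]
  exact integral_congr_ae (ae_of_all _ fun y => by ring)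

lemma pos_setIntegral {n : ℕ} {Ω : Set (Pt n)} (hopen : IsOpen Ω) (hmeas : MeasurableSet Ω)
    (hb : Bornology.IsBounded Ω) {f : Pt n → ℝ} (hint : IntegrableOn f Ω volume)
    (hnn : ∀ x ∈ Ω, 0 ≤ f x) {x₀ : Pt n} (hx₀ : x₀ ∈ Ω) (hcont : ContinuousAt f x₀)
    (hpos : 0 < f x₀) : 0 < ∫ x in Ω, f x := by
  have hnb : {y | f x₀ / 2 < f y} ∈ nhds x₀ := hcont.preimage_mem_nhds (Ioi_mem_nhds (by linarith))
  have hmem : {y | f x₀ / 2 < f y} ∩ Ω ∈ nhds x₀ :=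
    Filter.inter_mem hnb (hopen.mem_nhds hx₀)
  obtain ⟨U, hUsub, hUopen, hxU⟩ := mem_nhds_iff.1 hmem
  have hUΩ : U ⊆ Ω := fun y hy => (hUsub hy).2
  have hUf : ∀ y ∈ U, f x₀ / 2 ≤ f y := fun y hy => le_of_lt (hUsub hy).1
  have hUfin : volume U ≠ ⊤ := by
    exact ne_of_lt (lt_of_le_of_lt (measure_mono hUΩ) hb.measure_lt_top)
  have h1 : f x₀ / 2 * (volume U).toReal ≤ ∫ x in U, f x :=
    setIntegral_ge_of_const_le_real hUopen.measurableSet hUfin hUf (hint.mono_set hUΩ)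
  have h2 : (∫ x in U, f x) ≤ ∫ x in Ω, f x := by
    apply setIntegral_mono_set hint
    · exact (ae_restrict_iff' hmeas).2 (ae_of_all _ hnn)
    · exact HasSubset.Subset.eventuallyLE hUΩ
  have h3 : 0 < (volume U).toReal := by
    refine ENNReal.toReal_pos (ne_of_gt ?_) hUfin
    exact hUopen.measure_pos volume ⟨x₀, hxU⟩
  nlinarith

theorem stmt_6 {n : ℕ} (Ω : Set (Pt n)) (hΩ : IsBoundedDomain Ω)
    (k p : Pt n → Pt n → ℝ)
    (hk : IsDispersalKernel k) (hp : IsDispersalKernel p)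
    (hks : SymmKernel k) (hps : SymmKernel p)
    (m M : Pt n → ℝ)
    (hm : ContinuousOn m (closure Ω)) (hM : ContinuousOn M (closure Ω))
    (hmnc : Nonconstant Ω m) (hMnc : Nonconstant Ω M)
    (d D b c : ℝ) (hd : 0 < d) (hD : 0 < D) (hb : 0 < b) (hc : 0 < c)
    (hbc : b * c ≤ 1)
    (u v us vs : Pt n → ℝ)
    (huv : IsPositiveSteadyState Ω k p d D b c m M u v)
    (husvs : IsPositiveSteadyState Ω k p d D b c m M us vs)
    (hord1 : ∀ x ∈ closure Ω, us x < u x) (hord2 : ∀ x ∈ closure Ω, v x < vs x) :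
    b * c = 1 ∧ ∀ x ∈ closure Ω, u x + c * v x = us x + c * vs x := by
  obtain ⟨hΩo, hΩconn, hbd⟩ := hΩ
  have hmeas : MeasurableSet Ω := hΩo.measurableSet
  have hne : Ω.Nonempty := hΩconn.nonempty
  obtain ⟨⟨huc, hvc, hue, hve⟩, hup, hvp⟩ := huv
  obtain ⟨⟨husc, hvsc, huse, hvse⟩, husp, hvsp⟩ := husvs
  have hsub : Ω ⊆ closure Ω := subset_closure
  -- ### the k-side inequality I1
  have hh₁ : ContinuousOn (fun x => (u x - us x)^2/(u x * us x)) (closure Ω) :=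
    ((huc.sub husc).pow 2).div (huc.mul husc)
      (fun x hx => (mul_pos (hup x hx) (husp x hx)).ne')
  have hpt₁ : ∀ x ∈ Ω, ∀ y ∈ Ω,
      ((fun x => (u x - us x)^2/(u x * us x)) x - (fun x => (u x - us x)^2/(u x * us x)) y)
        * (us x * u y - u x * us y) ≤ 0 := by
    intro x hx y hy
    exact core_ineq (husp x (hsub hx)) (hord1 x (hsub hx)) (husp y (hsub hy)) (hord1 y (hsub hy))
  have hT₁ := sym_nonpos hmeas hbd k hk.1 hk.2.1 hks us u
    (fun x => (u x - us x)^2/(u x * us x)) husc huc hh₁ hpt₁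
  have hcongr₁ : Set.EqOn (fun x => (u x - us x)^2 * ((u x - us x) - c * (vs x - v x)))
      (fun x => d * ((u x - us x)^2/(u x * us x)
        * ∫ y in Ω, k x y * (us x * u y - u x * us y))) Ω := by
    intro x hx
    have hx' := hsub hx
    have e1 := hue x hx'
    have e2 := huse x hx'
    have hcross := nlOp_cross hbd hk.1 husc huc x
    have hu0 : u x ≠ 0 := (hup x hx').ne'
    have hus0 : us x ≠ 0 := (husp x hx').ne'
    simp only [← hcross]
    have ha : d * nlOp Ω k u x = -(u x * (m x - u x - c * v x)) := by linarith
    have ha' : d * nlOp Ω k us x = -(us x * (m x - us x - c * vs x)) := by linarith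
    have key : d * ((u x - us x)^2/(u x * us x)
          * (us x * nlOp Ω k u x - u x * nlOp Ω k us x))
        = (u x - us x)^2/(u x * us x)
          * (us x * (d * nlOp Ω k u x) - u x * (d * nlOp Ω k us x)) := by ring
    rw [key, ha, ha']
    field_simp
    ring
  have I1 : ∫ x in Ω, (u x - us x)^2 * ((u x - us x) - c * (vs x - v x)) ≤ 0 := by
    rw [setIntegral_congr_fun hmeas hcongr₁, integral_const_mul]
    exact mul_nonpos_of_nonneg_of_nonpos hd.le hT₁
  -- ### the p-side inequality I2
  have hh₂ : ContinuousOn (fun x => (vs x - v x)^2/(vs x * v x)) (closure Ω) :=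
    ((hvsc.sub hvc).pow 2).div (hvsc.mul hvc)
      (fun x hx => (mul_pos (hvsp x hx) (hvp x hx)).ne')
  have hpt₂ : ∀ x ∈ Ω, ∀ y ∈ Ω,
      ((fun x => (vs x - v x)^2/(vs x * v x)) x - (fun x => (vs x - v x)^2/(vs x * v x)) y)
        * (v x * vs y - vs x * v y) ≤ 0 := by
    intro x hx y hy
    exact core_ineq (hvp x (hsub hx)) (hord2 x (hsub hx)) (hvp y (hsub hy)) (hord2 y (hsub hy))
  have hT₂ := sym_nonpos hmeas hbd p hp.1 hp.2.1 hps v vs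
    (fun x => (vs x - v x)^2/(vs x * v x)) hvc hvsc hh₂ hpt₂
  have hcongr₂ : Set.EqOn (fun x => (vs x - v x)^2 * ((vs x - v x) - b * (u x - us x)))
      (fun x => D * ((vs x - v x)^2/(vs x * v x)
        * ∫ y in Ω, p x y * (v x * vs y - vs x * v y))) Ω := by
    intro x hx
    have hx' := hsub hx
    have e3 := hve x hx'
    have e4 := hvse x hx'
    have hcross := nlOp_cross hbd hp.1 hvc hvsc x
    have hv0 : v x ≠ 0 := (hvp x hx').ne'
    have hvs0 : vs x ≠ 0 := (hvsp x hx').ne'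
    simp only [← hcross]
    have ha : D * nlOp Ω p v x = -(v x * (M x - b * u x - v x)) := by linarith
    have ha' : D * nlOp Ω p vs x = -(vs x * (M x - b * us x - vs x)) := by linarith
    have key : D * ((vs x - v x)^2/(vs x * v x)
          * (v x * nlOp Ω p vs x - vs x * nlOp Ω p v x))
        = (vs x - v x)^2/(vs x * v x)
          * (v x * (D * nlOp Ω p vs x) - vs x * (D * nlOp Ω p v x)) := by ring
    rw [key, ha, ha']
    field_simp
    ring
  have I2 : ∫ x in Ω, (vs x - v x)^2 * ((vs x - v x) - b * (u x - us x)) ≤ 0 := by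
    rw [setIntegral_congr_fun hmeas hcongr₂, integral_const_mul]
    exact mul_nonpos_of_nonneg_of_nonpos hD.le hT₂
  -- ### integrability of various pieces
  have hwc : ContinuousOn (fun x => u x - us x) (closure Ω) := huc.sub husc
  have hzc : ContinuousOn (fun x => vs x - v x) (closure Ω) := hvsc.sub hvc
  have hintA : IntegrableOn (fun x => (u x - us x)^2 * ((u x - us x) - c * (vs x - v x))) Ω volume :=
    integrableOn_of_contOn hbd ((hwc.pow 2).mul (hwc.sub (continuousOn_const.mul hzc)))
  have hintZ3 : IntegrableOn (fun x => (vs x - v x)^3) Ω volume :=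
    integrableOn_of_contOn hbd (hzc.pow 3)
  have hintWZ2 : IntegrableOn (fun x => (u x - us x) * (vs x - v x)^2) Ω volume :=
    integrableOn_of_contOn hbd (hwc.mul (hzc.pow 2))
  have hNcont : ContinuousOn
      (fun x => ((u x - us x) - c * (vs x - v x))^2 * ((u x - us x) + c * (vs x - v x)))
      (closure Ω) :=
    ((hwc.sub (continuousOn_const.mul hzc)).pow 2).mul (hwc.add (continuousOn_const.mul hzc))
  have hintN : IntegrableOn
      (fun x => ((u x - us x) - c * (vs x - v x))^2 * ((u x - us x) + c * (vs x - v x))) Ω volume :=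
    integrableOn_of_contOn hbd hNcont
  -- ### split I2
  have hI2split : (∫ x in Ω, (vs x - v x)^3) - b * ∫ x in Ω, (u x - us x) * (vs x - v x)^2 ≤ 0 := by
    have e0 : ∫ x in Ω, (vs x - v x)^2 * ((vs x - v x) - b * (u x - us x))
        = ∫ x in Ω, ((vs x - v x)^3 - b * ((u x - us x) * (vs x - v x)^2)) :=
      setIntegral_congr_fun hmeas (fun x _ => by ring)
    have h9 := I2
    rw [e0, integral_sub hintZ3 (hintWZ2.const_mul b), integral_const_mul] at h9
    exact h9
  have hWZ2nn : 0 ≤ ∫ x in Ω, (u x - us x) * (vs x - v x)^2 :=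
    setIntegral_nonneg hmeas (fun x hx =>
      mul_nonneg (sub_nonneg.2 (hord1 x (hsub hx)).le) (sq_nonneg _))
  -- ### N ≤ 0
  have hNsplit : ∫ x in Ω, ((u x - us x) - c * (vs x - v x))^2 * ((u x - us x) + c * (vs x - v x))
      = (∫ x in Ω, (u x - us x)^2 * ((u x - us x) - c * (vs x - v x)))
        + (c^3 * (∫ x in Ω, (vs x - v x)^3) - c^2 * ∫ x in Ω, (u x - us x) * (vs x - v x)^2) := by
    have hg : Integrable (fun x => c^3 * (vs x - v x)^3 - c^2 * ((u x - us x) * (vs x - v x)^2))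
        (volume.restrict Ω) := (hintZ3.const_mul _).sub (hintWZ2.const_mul _)
    have e0 : ∫ x in Ω, ((u x - us x) - c * (vs x - v x))^2 * ((u x - us x) + c * (vs x - v x))
        = ∫ x in Ω, ((u x - us x)^2 * ((u x - us x) - c * (vs x - v x))
            + (c^3 * (vs x - v x)^3 - c^2 * ((u x - us x) * (vs x - v x)^2))) :=
      setIntegral_congr_fun hmeas (fun x _ => by ring)
    rw [e0, integral_add hintA hg, integral_sub (hintZ3.const_mul _) (hintWZ2.const_mul _),
      integral_const_mul, integral_const_mul]
  have htail : c^3 * (∫ x in Ω, (vs x - v x)^3)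
      - c^2 * (∫ x in Ω, (u x - us x) * (vs x - v x)^2) ≤ 0 := by
    have h5 : c^3 * (∫ x in Ω, (vs x - v x)^3)
        ≤ c^3 * (b * ∫ x in Ω, (u x - us x) * (vs x - v x)^2) := by
      have := hI2split
      nlinarith [pow_pos hc 3]
    have h6 : c^3 * b ≤ c^2 := by nlinarith
    nlinarith [mul_le_mul_of_nonneg_right h6 hWZ2nn]
  have hN : ∫ x in Ω, ((u x - us x) - c * (vs x - v x))^2 * ((u x - us x) + c * (vs x - v x)) ≤ 0 := by
    rw [hNsplit]; linarith
  -- ### pointwise vanishing on Ω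
  have hEqΩ : ∀ x ∈ Ω, (u x - us x) = c * (vs x - v x) := by
    intro x hx
    by_contra hne'
    have hx' := hsub hx
    have hfx : 0 < ((u x - us x) - c * (vs x - v x))^2 * ((u x - us x) + c * (vs x - v x)) := by
      have h7 : 0 < (u x - us x) + c * (vs x - v x) := by
        have := hord1 x hx'; have := hord2 x hx'; nlinarith
      have h8 : ((u x - us x) - c * (vs x - v x)) ≠ 0 := sub_ne_zero.2 hne'
      positivity
    have hca : ContinuousAt
        (fun x => ((u x - us x) - c * (vs x - v x))^2 * ((u x - us x) + c * (vs x - v x))) x :=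
      hNcont.continuousAt (mem_nhds_iff.2 ⟨Ω, hsub, hΩo, hx⟩)
    have hNnn : ∀ y ∈ Ω, 0 ≤ ((u y - us y) - c * (vs y - v y))^2 * ((u y - us y) + c * (vs y - v y)) := by
      intro y hy
      have hy' := hsub hy
      have h7 : 0 ≤ (u y - us y) + c * (vs y - v y) := by
        have := hord1 y hy'; have := hord2 y hy'; nlinarith
      positivity
    exact absurd (pos_setIntegral hΩo hmeas hbd hintN hNnn hx hca hfx) (not_lt.2 hN)
  -- ### extend to the closure
  have hEqcl : ∀ x ∈ closure Ω, u x + c * v x = us x + c * vs x := by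
    intro x hx
    have hqc : ContinuousOn (fun y => (u y - us y) - c * (vs y - v y)) (closure Ω) :=
      hwc.sub (continuousOn_const.mul hzc)
    have h1 : Tendsto (fun y => (u y - us y) - c * (vs y - v y)) (nhdsWithin x Ω)
        (nhds ((u x - us x) - c * (vs x - v x))) := (hqc x hx).mono hsub
    have h2 : Tendsto (fun y => (u y - us y) - c * (vs y - v y)) (nhdsWithin x Ω) (nhds 0) := by
      refine Tendsto.congr' ?_ tendsto_const_nhds
      filter_upwards [self_mem_nhdsWithin] with y hy
      have := hEqΩ y hy; linarith
    haveI := mem_closure_iff_nhdsWithin_neBot.1 hx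
    have h3 : (u x - us x) - c * (vs x - v x) = 0 := tendsto_nhds_unique h1 h2
    linarith
  refine ⟨?_, hEqcl⟩
  -- ### b * c = 1
  refine le_antisymm hbc ?_
  have hWZ2eq : ∫ x in Ω, (u x - us x) * (vs x - v x)^2 = c * ∫ x in Ω, (vs x - v x)^3 := by
    rw [← integral_const_mul]
    refine setIntegral_congr_fun hmeas (fun x hx => ?_)
    rw [hEqΩ x hx]; ring
  obtain ⟨x₀, hx₀⟩ := hne
  have hz3pos : 0 < ∫ x in Ω, (vs x - v x)^3 := by
    refine pos_setIntegral hΩo hmeas hbd hintZ3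
      (fun x hx => pow_nonneg (sub_nonneg.2 (hord2 x (hsub hx)).le) 3) hx₀ ?_ ?_
    · exact (hzc.pow 3).continuousAt (mem_nhds_iff.2 ⟨Ω, hsub, hΩo, hx₀⟩)
    · exact pow_pos (sub_pos.2 (hord2 x₀ (hsub hx₀))) 3
  nlinarith [hI2split, hWZ2eq, hz3pos]
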